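/- Let ε′ > 0, θ ∈ [0, π], and let k be a positive integer. Define the perturbed collision probability P̃ = (1 − θ/π)·(e^{ε′} − 1)²/(e^{ε′} + 1)² + 2e^{ε′}/(e^{ε′} + 1)², and let I₁, …, I_k be i.i.d. Bernoulli(P̃) random variables. Define the estimator θ̂ = π·( 1 − [ ((e^{ε′}+1)²/(e^{ε′}−1)²) · (1/k)·Σ_{j=1}^k I_j − 2e^{ε′}/(e^{ε′}−1)² ] ). Then E[θ̂] = θ and Var(θ̂) = V/k, where V = θ(π − θ) + 2π²·e^{ε′}/(e^{ε′} − 1)² + 4π²·e^{2ε′}/(e^{ε′} − 1)⁴. -/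

import Mathlib

open MeasureTheory ProbabilityTheory Real

/-- The uniform distribution on `[0,1]`, used to drive the Bernoulli samples. -/
noncomputable def uniform01 : Measure ℝ := volume.restrict (Set.Icc (0 : ℝ) 1)

instance : IsProbabilityMeasure uniform01 :=
  ⟨by rw [uniform01, Measure.restrict_apply_univ, Real.volume_Icc]; norm_num⟩

/-- The perturbed collision probability
`P̃ = (1 − θ/π)·(e^{ε'}−1)²/(e^{ε'}+1)² + 2e^{ε'}/(e^{ε'}+1)²`. -/
noncomputable def Ptilde (ε' θ : ℝ) : ℝ :=
  (1 - θ / π) * (Real.exp ε' - 1) ^ 2 / (Real.exp ε' + 1) ^ 2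
    + 2 * Real.exp ε' / (Real.exp ε' + 1) ^ 2

/-- The DP-SignRP-RR angle estimator
`θ̂ = π(1 − ((e^{ε'}+1)²/(e^{ε'}−1)²·(1/k)·Σⱼ Iⱼ − 2e^{ε'}/(e^{ε'}−1)²))`, where
`Iⱼ = 1{rⱼ ≤ P̃}` are i.i.d. `Bernoulli(P̃)` indicators driven by uniform variables. -/
noncomputable def thetaHat (k : ℕ) (ε' θ : ℝ) (r : Fin k → ℝ) : ℝ :=
  π * (1 - ((Real.exp ε' + 1) ^ 2 / (Real.exp ε' - 1) ^ 2
        * ((1 : ℝ) / k) * (∑ j : Fin k, if r j ≤ Ptilde ε' θ then (1 : ℝ) else 0)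
      - 2 * Real.exp ε' / (Real.exp ε' - 1) ^ 2))

lemma aux_variance_affine {Ω : Type*} {mΩ : MeasurableSpace Ω} {μ : Measure Ω}
    [IsProbabilityMeasure μ] {X : Ω → ℝ} (hX : MemLp X 2 μ) (a b : ℝ) :
    variance (fun ω => a - b * X ω) μ = b ^ 2 * variance X μ := by
  have hiX : Integrable X μ := hX.integrable one_le_two
  have h2 : Integrable (fun ω => X ω ^ 2) μ := hX.integrable_sq
  have hY : MemLp (fun ω => a - b * X ω) 2 μ := (memLp_const a).sub (hX.const_mul b)
  rw [variance_eq_sub hY, variance_eq_sub hX]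
  simp only [Pi.pow_apply]
  have e1 : (fun ω => (a - b * X ω) ^ 2) = fun ω => a ^ 2 + ((-(2 * a * b)) * X ω + b ^ 2 * X ω ^ 2) := by
    funext ω; ring
  have hg : Integrable (fun ω => -(2 * a * b) * X ω + b ^ 2 * X ω ^ 2) μ :=
    (hiX.const_mul _).add (h2.const_mul _)
  have hbx : Integrable (fun ω => b * X ω) μ := hiX.const_mul b
  rw [e1, integral_add (integrable_const _) hg,
    integral_add (hiX.const_mul _) (h2.const_mul _), integral_const_mul, integral_const_mul,
    integral_const, integral_sub (integrable_const a) hbx,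
    integral_const, integral_const_mul]
  simp only [measure_univ, probReal_univ, ENNReal.toReal_one, smul_eq_mul, one_mul]
  ring

lemma aux_map_eval (k : ℕ) (j : Fin k) :
    (Measure.pi fun _ : Fin k => uniform01).map (fun r => r j) = uniform01 := by
  classical
  ext s hs
  rw [Measure.map_apply (measurable_pi_apply j) hs]
  have h1 : (fun r : Fin k → ℝ => r j) ⁻¹' s
      = Set.pi Set.univ (Function.update (fun _ => Set.univ) j s) := Set.eval_preimage
  rw [h1, Measure.pi_pi]
  have h2 : (fun i => uniform01 (Function.update (fun _ : Fin k => (Set.univ : Set ℝ)) j s i))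
      = Function.update (fun _ : Fin k => uniform01 Set.univ) j (uniform01 s) := by
    funext i
    exact Function.apply_update (fun _ t => uniform01 t) (fun _ => Set.univ) j s i
  rw [h2, Finset.prod_update_of_mem (Finset.mem_univ j)]
  simp [measure_univ]

lemma aux_indep_eval (k : ℕ) {i j : Fin k} (hij : i ≠ j) :
    IndepFun (fun r : Fin k → ℝ => r i) (fun r => r j)
      (Measure.pi fun _ : Fin k => uniform01) := by
  classical
  rw [indepFun_iff_measure_inter_preimage_eq_mul]
  intro A B hA hB
  have hmapi : (Measure.pi fun _ : Fin k => uniform01) ((fun r : Fin k → ℝ => r i) ⁻¹' A)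
      = uniform01 A := by
    rw [← Measure.map_apply (measurable_pi_apply i) hA, aux_map_eval]
  have hmapj : (Measure.pi fun _ : Fin k => uniform01) ((fun r : Fin k → ℝ => r j) ⁻¹' B)
      = uniform01 B := by
    rw [← Measure.map_apply (measurable_pi_apply j) hB, aux_map_eval]
  rw [hmapi, hmapj]
  have h1 : (fun r : Fin k → ℝ => r i) ⁻¹' A
      = Set.pi Set.univ (Function.update (fun _ => Set.univ) i A) := Set.eval_preimage
  have h2 : (fun r : Fin k → ℝ => r j) ⁻¹' B
      = Set.pi Set.univ (Function.update (fun _ => Set.univ) j B) := Set.eval_preimage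
  rw [h1, h2, ← Set.pi_inter_distrib, Measure.pi_pi]
  have h3 : (fun l => uniform01 (Function.update (fun _ : Fin k => (Set.univ : Set ℝ)) i A l
        ∩ Function.update (fun _ : Fin k => (Set.univ : Set ℝ)) j B l))
      = Function.update (Function.update (fun _ : Fin k => (1 : ENNReal)) i (uniform01 A)) j
          (uniform01 B) := by
    funext l
    by_cases hli : l = i
    · by_cases hlj : l = j
      · exact absurd (hli.symm.trans hlj) hij
      · simp [Function.update_apply, hli, hlj, hij, measure_univ]
    · by_cases hlj : l = j
      · simp [Function.update_apply, hli, hlj, Ne.symm hij, measure_univ]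
      · simp [Function.update_apply, hli, hlj, measure_univ]
  rw [h3, Finset.prod_update_of_mem (Finset.mem_univ j),
    Finset.prod_update_of_mem (Finset.mem_sdiff.mpr ⟨Finset.mem_univ i, by simp [hij]⟩)]
  simp [mul_comm]

lemma aux_int_indicator {p : ℝ} (hp0 : 0 ≤ p) (hp1 : p ≤ 1) :
    ∫ x, (if x ≤ p then (1 : ℝ) else 0) ∂uniform01 = p := by
  have h1 : (fun x : ℝ => if x ≤ p then (1 : ℝ) else 0)
      = Set.indicator (Set.Iic p) (fun _ => (1 : ℝ)) := by
    funext x; simp [Set.indicator_apply, Set.mem_Iic]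
  rw [h1, integral_indicator measurableSet_Iic, setIntegral_const, smul_eq_mul, mul_one,
    uniform01, measureReal_restrict_apply measurableSet_Iic]
  have h2 : Set.Iic p ∩ Set.Icc 0 1 = Set.Icc 0 p := by
    ext x
    simp only [Set.mem_inter_iff, Set.mem_Iic, Set.mem_Icc]
    constructor
    · rintro ⟨h, h0, _⟩; exact ⟨h0, h⟩
    · rintro ⟨h0, h⟩; exact ⟨h, h0, h.trans hp1⟩
  rw [h2, measureReal_def, Real.volume_Icc, ENNReal.toReal_ofReal (by linarith)]
  ring

/-- **Utility of DP-SignRP-RR angle estimation.** For `ε' > 0`, `θ ∈ [0, π]` and i.i.d.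
`Bernoulli(P̃)` indicators `I₁, …, I_k`, the estimator `θ̂` satisfies `E[θ̂] = θ` and
`Var(θ̂) = V/k` with `V = θ(π−θ) + 2π²e^{ε'}/(e^{ε'}−1)² + 4π²e^{2ε'}/(e^{ε'}−1)⁴`. -/
theorem dp_signrp_rr_estimator_mean_variance (k : ℕ) (hk : 0 < k)
    (ε' θ : ℝ) (hε' : 0 < ε') (hθ : θ ∈ Set.Icc (0 : ℝ) π) :
    (∫ r : Fin k → ℝ, thetaHat k ε' θ r
        ∂(Measure.pi (fun _ : Fin k => uniform01))) = θ
    ∧ variance (thetaHat k ε' θ) (Measure.pi (fun _ : Fin k => uniform01))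
      = (θ * (π - θ) + 2 * π ^ 2 * Real.exp ε' / (Real.exp ε' - 1) ^ 2
          + 4 * π ^ 2 * Real.exp (2 * ε') / (Real.exp ε' - 1) ^ 4) / k := by
  obtain ⟨hθ0, hθπ⟩ := hθ
  have hπ : (0 : ℝ) < π := Real.pi_pos
  have hE : (1 : ℝ) < Real.exp ε' := by
    have := Real.exp_lt_exp.mpr hε'
    simpa using this
  set E := Real.exp ε' with hEdef
  have hE1 : E - 1 ≠ 0 := by intro h; nlinarith
  have hEp : E + 1 ≠ 0 := by intro h; nlinarith
  have hπ' : π ≠ 0 := ne_of_gt hπ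
  have hk' : (k : ℝ) ≠ 0 := Nat.cast_ne_zero.mpr hk.ne'
  set p := Ptilde ε' θ with hpdef
  have ha : 0 ≤ 1 - θ / π := by
    rw [sub_nonneg]
    exact (div_le_one hπ).mpr hθπ
  have ha1 : 1 - θ / π ≤ 1 := by
    have : 0 ≤ θ / π := div_nonneg hθ0 hπ.le
    linarith
  have hEpos : (0 : ℝ) < E := lt_trans one_pos hE
  have hp0 : 0 ≤ p := by
    rw [hpdef, Ptilde]
    have t1 : 0 ≤ (1 - θ / π) * (Real.exp ε' - 1) ^ 2 / (Real.exp ε' + 1) ^ 2 :=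
      div_nonneg (mul_nonneg ha (sq_nonneg _)) (sq_nonneg _)
    have t2 : 0 ≤ 2 * Real.exp ε' / (Real.exp ε' + 1) ^ 2 := by positivity
    linarith
  have hp1 : p ≤ 1 := by
    rw [hpdef, Ptilde, ← add_div, div_le_one (by positivity)]
    nlinarith [mul_le_of_le_one_left (sq_nonneg (Real.exp ε' - 1)) ha1]
  set f : ℝ → ℝ := fun x => if x ≤ p then 1 else 0 with hfdef
  set mpi : Measure (Fin k → ℝ) := Measure.pi fun _ : Fin k => uniform01 with hmpidef
  have hf_meas : Measurable f := Measurable.ite measurableSet_Iic measurable_const measurable_const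
  have hfsq : ∀ x, f x ^ 2 = f x := by
    intro x; rw [hfdef]; dsimp only; split <;> norm_num
  have hXmeas : ∀ j : Fin k, Measurable (fun r : Fin k → ℝ => f (r j)) :=
    fun j => hf_meas.comp (measurable_pi_apply j)
  have hXmem : ∀ j : Fin k, MemLp (fun r : Fin k → ℝ => f (r j)) 2 mpi := by
    intro j
    refine MemLp.of_bound (hXmeas j).aestronglyMeasurable 1 (Filter.Eventually.of_forall ?_)
    intro r
    rw [hfdef]; dsimp only; split <;> simp
  have hiXj : ∀ j : Fin k, Integrable (fun r : Fin k → ℝ => f (r j)) mpi :=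
    fun j => (hXmem j).integrable one_le_two
  have hint_f : ∫ x, f x ∂uniform01 = p := aux_int_indicator hp0 hp1
  have hEX : ∀ j : Fin k, ∫ r, f (r j) ∂mpi = p := by
    intro j
    rw [hmpidef, ← integral_map (measurable_pi_apply j).aemeasurable
      hf_meas.aestronglyMeasurable, aux_map_eval k j]
    exact hint_f
  have hrepr : thetaHat k ε' θ = fun r : Fin k → ℝ =>
      π * (1 + 2 * E / (E - 1) ^ 2) - π * (E + 1) ^ 2 / ((E - 1) ^ 2 * k)
        * ∑ j : Fin k, f (r j) := by
    funext r
    rw [thetaHat]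
    rw [hfdef]
    simp only [← hpdef, ← hEdef]
    field_simp
    ring
  -- mean
  have hiS : Integrable (fun r : Fin k → ℝ => ∑ j : Fin k, f (r j)) mpi :=
    integrable_finset_sum _ fun j _ => hiXj j
  have hmean : (∫ r : Fin k → ℝ, thetaHat k ε' θ r ∂mpi) = θ := by
    rw [hrepr]
    rw [integral_sub (integrable_const _) (hiS.const_mul _), integral_const, integral_const_mul,
      integral_finset_sum _ fun j _ => hiXj j]
    simp only [hEX, Finset.sum_const, Finset.card_univ, Fintype.card_fin, nsmul_eq_mul,
      measure_univ, probReal_univ, ENNReal.toReal_one, one_smul]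
    rw [hpdef, Ptilde, ← hEdef]
    field_simp
    ring
  refine ⟨hmean, ?_⟩
  -- variance
  have hvarX : ∀ j : Fin k, variance (fun r : Fin k → ℝ => f (r j)) mpi = p - p ^ 2 := by
    intro j
    rw [variance_eq_sub (hXmem j)]
    have h1 : (fun r : Fin k → ℝ => f (r j)) ^ 2 = fun r => f (r j) := by
      funext r; simp only [Pi.pow_apply]; exact hfsq _
    rw [h1]
    rw [hEX j]
  have hindep : ∀ i j : Fin k, i ≠ j →
      IndepFun (fun r : Fin k → ℝ => f (r i)) (fun r => f (r j)) mpi := by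
    intro i j hij
    exact (aux_indep_eval k hij).comp hf_meas hf_meas
  have hsum_eq : (fun r : Fin k → ℝ => ∑ j : Fin k, f (r j))
      = ∑ j : Fin k, fun r : Fin k → ℝ => f (r j) := by
    funext r; simp [Finset.sum_apply]
  have hSmem : MemLp (fun r : Fin k → ℝ => ∑ j : Fin k, f (r j)) 2 mpi := by
    rw [hsum_eq]
    exact memLp_finset_sum' _ fun j _ => hXmem j
  have hSvar : variance (fun r : Fin k → ℝ => ∑ j : Fin k, f (r j)) mpi = k * (p - p ^ 2) := by
    rw [hsum_eq, IndepFun.variance_sum (fun j _ => hXmem j)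
      (fun i _ j _ hij => hindep i j hij)]
    simp [hvarX, Finset.sum_const, Finset.card_univ, mul_comm]
    ring
  rw [hrepr, aux_variance_affine hSmem, hSvar]
  rw [hpdef, Ptilde, ← hEdef]
  have h2e : Real.exp (2 * ε') = E ^ 2 := by
    rw [two_mul, Real.exp_add, ← hEdef]; ring
  rw [h2e]
  field_simp
  ring
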